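/- Let G=(V,E) be a simple, connected, d-regular graph. If a vertex x∈V is (R)-Ricci flat, then Γ₂(f)(x) ≥ 2·Γ(f)(x) for every function f:V→ℝ; in particular, the Bakry–Émery curvature satisfies K_∞(x) ≥ 2. -/
import Mathlib


open Filter
open scoped Classical

variable {V : Type*}

/-- The (non-normalized) graph Laplacian `Δf(x) = ∑_{y ∼ x} (f(y) - f(x))`. -/
noncomputable def graphLap (G : SimpleGraph V) [G.LocallyFinite] (f : V → ℝ) (x : V) : ℝ :=
  ∑ y ∈ G.neighborFinset x, (f y - f x)

/-- The operator `Γ`: `2Γ(f,g) = Δ(fg) - fΔg - gΔf`. -/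
noncomputable def gammaOp (G : SimpleGraph V) [G.LocallyFinite] (f g : V → ℝ) (x : V) : ℝ :=
  (graphLap G (fun z => f z * g z) x - f x * graphLap G g x - g x * graphLap G f x) / 2

/-- The operator `Γ₂`: `2Γ₂(f) = ΔΓ(f) - 2Γ(f, Δf)`, where `Γ(f) = Γ(f,f)`. -/
noncomputable def gamma2Op (G : SimpleGraph V) [G.LocallyFinite] (f : V → ℝ) (x : V) : ℝ :=
  (graphLap G (fun z => gammaOp G f f z) x - 2 * gammaOp G f (graphLap G f) x) / 2

/-- The set of lower Bakry–Émery curvature bounds at `x`: all `K` such that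
`Γ₂(f)(x) ≥ K·Γ(f)(x)` for every `f : V → ℝ`.  The Bakry–Émery curvature `K_∞(x)` is the
largest element of this set. -/
def curvBounds (G : SimpleGraph V) [G.LocallyFinite] (x : V) : Set ℝ :=
  {K : ℝ | ∀ f : V → ℝ, K * gammaOp G f f x ≤ gamma2Op G f x}

/-- The closed ball of radius 1 around `x`. -/
def closedBall1 (G : SimpleGraph V) (x : V) : Set V := insert x (G.neighborSet x)

/-- The maps `η_i : B₁(x) → V`, `1 ≤ i ≤ d`, witness Ricci flatness at `x`:
(i) `η_i(u) ∼ u` for all `u ∈ B₁(x)`; (ii) `η_i(u) ≠ η_j(u)` for `i ≠ j`;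
(iii) `⋃_j η_j(η_i(x)) = ⋃_j η_i(η_j(x))` for all `i`. -/
def IsRicciFlatMaps (G : SimpleGraph V) (d : ℕ) (x : V) (η : Fin d → V → V) : Prop :=
  (∀ i, ∀ u ∈ closedBall1 G x, G.Adj u (η i u)) ∧
  (∀ i j, i ≠ j → ∀ u ∈ closedBall1 G x, η i u ≠ η j u) ∧
  (∀ i, Set.range (fun j => η j (η i x)) = Set.range (fun j => η i (η j x)))

/-- `x` is Ricci flat. -/
def RicciFlatAt (G : SimpleGraph V) (d : ℕ) (x : V) : Prop :=
  ∃ η : Fin d → V → V, IsRicciFlatMaps G d x η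

/-- `x` is (R)-Ricci flat: in addition `η_i(η_i(x)) = x` for all `i`. -/
def RRicciFlatAt (G : SimpleGraph V) (d : ℕ) (x : V) : Prop :=
  ∃ η : Fin d → V → V, IsRicciFlatMaps G d x η ∧ ∀ i, η i (η i x) = x

/-- `x` is (S)-Ricci flat: in addition `η_j(η_i(x)) = η_i(η_j(x))` for all `i, j`. -/
def SRicciFlatAt (G : SimpleGraph V) (d : ℕ) (x : V) : Prop :=
  ∃ η : Fin d → V → V, IsRicciFlatMaps G d x η ∧ ∀ i j, η j (η i x) = η i (η j x)

/-- `x` is (RS)-Ricci flat: both additional conditions hold simultaneously. -/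
def RSRicciFlatAt (G : SimpleGraph V) (d : ℕ) (x : V) : Prop :=
  ∃ η : Fin d → V → V, IsRicciFlatMaps G d x η ∧ (∀ i, η i (η i x) = x) ∧
    (∀ i j, η j (η i x) = η i (η j x))

/-! ### Auxiliary lemmas -/


lemma gammaOp_eq (G : SimpleGraph V) [G.LocallyFinite] (f g : V → ℝ) (z : V) :
    gammaOp G f g z = (∑ y ∈ G.neighborFinset z, (f y - f z) * (g y - g z)) / 2 := by
  unfold gammaOp graphLap
  rw [Finset.mul_sum, Finset.mul_sum, ← Finset.sum_sub_distrib, ← Finset.sum_sub_distrib]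
  congr 1
  exact Finset.sum_congr rfl (fun y _ => by ring)

lemma graphLap_shift (G : SimpleGraph V) [G.LocallyFinite] (f : V → ℝ) (c : ℝ) :
    graphLap G (fun z => f z - c) = graphLap G f := by
  funext y
  exact Finset.sum_congr rfl (fun z _ => by ring)

lemma gammaOp_shift (G : SimpleGraph V) [G.LocallyFinite] (f : V → ℝ) (c : ℝ) (z : V) :
    gammaOp G (fun w => f w - c) (fun w => f w - c) z = gammaOp G f f z := by
  rw [gammaOp_eq, gammaOp_eq]
  congr 1
  exact Finset.sum_congr rfl (fun y _ => by ring)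

lemma gammaOp_shift' (G : SimpleGraph V) [G.LocallyFinite] (f h : V → ℝ) (c : ℝ) (z : V) :
    gammaOp G (fun w => f w - c) h z = gammaOp G f h z := by
  rw [gammaOp_eq, gammaOp_eq]
  congr 1
  exact Finset.sum_congr rfl (fun y _ => by ring)

lemma gamma2Op_shift (G : SimpleGraph V) [G.LocallyFinite] (f : V → ℝ) (c : ℝ) (x : V) :
    gamma2Op G (fun w => f w - c) x = gamma2Op G f x := by
  unfold gamma2Op
  have h1 : (fun z => gammaOp G (fun w => f w - c) (fun w => f w - c) z)
      = fun z => gammaOp G f f z := funext (fun z => gammaOp_shift G f c z)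
  rw [h1, graphLap_shift, gammaOp_shift']

/-- Pure finite-sum inequality at the heart of the argument. -/
lemma key_ineq (d : ℕ) (a : Fin d → ℝ) (v : Fin d → Fin d → ℝ)
    (hE : ∑ i, ∑ j, v i j * a j = ∑ i, ∑ j, v i j * a i)
    (hdiag : ∀ i, v i i = 0) :
    2 * ((∑ i, (a i)^2)/2) ≤
      ((∑ i, ((∑ j, (v i j - a i)^2)/2 - (∑ j, (a j)^2)/2)) -
        2 * ((∑ i, a i * ((∑ j, (v i j - a i)) - ∑ j, a j))/2)) / 2 := by
  have hconst : ∀ c : ℝ, ∑ _i : Fin d, c = (d : ℝ) * c := by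
    intro c
    rw [Finset.sum_const, Finset.card_univ, Fintype.card_fin, nsmul_eq_mul]
  have hSS : ∑ i : Fin d, ∑ j : Fin d, a i * a j = (∑ i, a i) * (∑ i, a i) := by
    have h1 : ∀ i : Fin d, ∑ j, a i * a j = a i * ∑ j, a j :=
      fun i => (Finset.mul_sum _ _ _).symm
    rw [Finset.sum_congr rfl (fun i _ => h1 i), ← Finset.sum_mul]
  have hQcomm : ∑ i : Fin d, ∑ j : Fin d, a i * v i j = ∑ i, ∑ j, v i j * a i :=
    Finset.sum_congr rfl (fun i _ => Finset.sum_congr rfl (fun j _ => mul_comm _ _))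
  -- L1
  have L1 : ∑ i : Fin d, ∑ j, (v i j - a i)^2
      = (∑ i, ∑ j, (v i j)^2) - 2*(∑ i, ∑ j, v i j * a i) + (d:ℝ)*(∑ i, (a i)^2) := by
    have h1 : ∀ i : Fin d, ∑ j, (v i j - a i)^2
        = (∑ j, (v i j)^2) - 2*(∑ j, v i j * a i) + (d:ℝ)*(a i)^2 := by
      intro i
      have hterm : ∀ j : Fin d, (v i j - a i)^2 = (v i j)^2 - 2*(v i j * a i) + (a i)^2 :=
        fun j => by ring
      rw [Finset.sum_congr rfl (fun j _ => hterm j), Finset.sum_add_distrib,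
        Finset.sum_sub_distrib, ← Finset.mul_sum, hconst]
    rw [Finset.sum_congr rfl (fun i _ => h1 i), Finset.sum_add_distrib,
      Finset.sum_sub_distrib, ← Finset.mul_sum, ← Finset.mul_sum]
  -- L2
  have L2 : ∑ i : Fin d, ∑ j, (v i j - a i - a j)^2
      = (∑ i, ∑ j, (v i j)^2) - 2*(∑ i, ∑ j, v i j * a i) - 2*(∑ i, ∑ j, v i j * a j)
        + (d:ℝ)*(∑ i, (a i)^2) + (d:ℝ)*(∑ j, (a j)^2)
        + 2*(∑ i, ∑ j, a i * a j) := by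
    have h1 : ∀ i : Fin d, ∑ j, (v i j - a i - a j)^2
        = (∑ j, (v i j)^2) - 2*(∑ j, v i j * a i) - 2*(∑ j, v i j * a j)
          + (d:ℝ)*(a i)^2 + (∑ j, (a j)^2) + 2*(∑ j, a i * a j) := by
      intro i
      have hterm : ∀ j : Fin d, (v i j - a i - a j)^2
          = (v i j)^2 - 2*(v i j * a i) - 2*(v i j * a j) + (a i)^2 + (a j)^2
            + 2*(a i * a j) := fun j => by ring
      rw [Finset.sum_congr rfl (fun j _ => hterm j), Finset.sum_add_distrib,
        Finset.sum_add_distrib, Finset.sum_add_distrib, Finset.sum_sub_distrib,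
        Finset.sum_sub_distrib, ← Finset.mul_sum, ← Finset.mul_sum, ← Finset.mul_sum,
        hconst]
    rw [Finset.sum_congr rfl (fun i _ => h1 i), Finset.sum_add_distrib,
      Finset.sum_add_distrib, Finset.sum_add_distrib, Finset.sum_sub_distrib,
      Finset.sum_sub_distrib, ← Finset.mul_sum, ← Finset.mul_sum, ← Finset.mul_sum,
      ← Finset.mul_sum, hconst]
  -- L3
  have L3 : ∑ i : Fin d, a i * ((∑ j, (v i j - a i)) - ∑ j, a j)
      = (∑ i, ∑ j, a i * v i j) - (d:ℝ)*(∑ i, (a i)^2) - (∑ i, ∑ j, a i * a j) := by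
    have h1 : ∀ i : Fin d, a i * ((∑ j, (v i j - a i)) - ∑ j, a j)
        = (∑ j, a i * v i j) - (d:ℝ)*(a i)^2 - ∑ j, a i * a j := by
      intro i
      rw [Finset.sum_sub_distrib, hconst, mul_sub, mul_sub, Finset.mul_sum, Finset.mul_sum]
      ring
    rw [Finset.sum_congr rfl (fun i _ => h1 i), Finset.sum_sub_distrib,
      Finset.sum_sub_distrib, ← Finset.mul_sum]
  -- positivity part
  have hpos : 4*(∑ i, (a i)^2) ≤ ∑ i : Fin d, ∑ j, (v i j - a i - a j)^2 := by
    have h1 : ∀ i : Fin d, 4*(a i)^2 ≤ ∑ j, (v i j - a i - a j)^2 := by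
      intro i
      have h2 : (v i i - a i - a i)^2 ≤ ∑ j, (v i j - a i - a j)^2 :=
        Finset.single_le_sum (f := fun j => (v i j - a i - a j)^2)
          (fun j _ => sq_nonneg _) (Finset.mem_univ i)
      have h3 : (v i i - a i - a i)^2 = 4*(a i)^2 := by rw [hdiag i]; ring
      linarith
    calc 4*(∑ i, (a i)^2) = ∑ i, 4*(a i)^2 := Finset.mul_sum _ _ _
      _ ≤ _ := Finset.sum_le_sum (fun i _ => h1 i)
  rw [L2] at hpos
  have hsplit : ∑ i : Fin d, ((∑ j, (v i j - a i)^2)/2 - (∑ j, (a j)^2)/2)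
      = (∑ i, ∑ j, (v i j - a i)^2)/2 - (d:ℝ)*((∑ j, (a j)^2)/2) := by
    rw [Finset.sum_sub_distrib, ← Finset.sum_div, hconst]
  rw [hsplit, L1, L3, hQcomm]
  linarith [hpos, hE, hSS]

/-- In a simple, connected, `d`-regular graph, if `x` is (R)-Ricci flat then
`Γ₂(f)(x) ≥ 2·Γ(f)(x)` for every `f : V → ℝ`; in particular the Bakry–Émery curvature
satisfies `K_∞(x) ≥ 2` (that is, `2` is a lower curvature bound at `x`). -/
theorem stmt_5 (G : SimpleGraph V) [G.LocallyFinite] (hconn : G.Connected)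
    (d : ℕ) (hreg : G.IsRegularOfDegree d) (x : V) (hx : RRicciFlatAt G d x) :
    (∀ f : V → ℝ, 2 * gammaOp G f f x ≤ gamma2Op G f x) ∧ 2 ∈ curvBounds G x := by
  obtain ⟨η, ⟨hAdj, hNe, hRange⟩, hR⟩ := hx
  have main : ∀ f : V → ℝ, 2 * gammaOp G f f x ≤ gamma2Op G f x := by
    intro f
    rw [← gammaOp_shift G f (f x) x, ← gamma2Op_shift G f (f x) x]
    set g : V → ℝ := fun w => f w - f x with hgdef
    have hg0 : g x = 0 := sub_self _
    have hx1 : x ∈ closedBall1 G x := Set.mem_insert _ _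
    have hadjx : ∀ i, G.Adj x (η i x) := fun i => hAdj i x hx1
    have hmem : ∀ i, η i x ∈ closedBall1 G x := by
      intro i
      exact Set.mem_insert_of_mem _ ((G.mem_neighborSet x (η i x)).2 (hadjx i))
    have hinj : ∀ u ∈ closedBall1 G x, Function.Injective (fun i => η i u) := by
      intro u hu i j hij
      by_contra hne
      exact hNe i j hne u hu hij
    have himg : ∀ u ∈ closedBall1 G x,
        Finset.image (fun i => η i u) Finset.univ = G.neighborFinset u := by
      intro u hu
      apply Finset.eq_of_subset_of_card_le
      · intro z hz
        simp only [Finset.mem_image, Finset.mem_univ, true_and] at hz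
        obtain ⟨i, rfl⟩ := hz
        exact (G.mem_neighborFinset u (η i u)).2 (hAdj i u hu)
      · rw [Finset.card_image_of_injective _ (hinj u hu), Finset.card_univ,
          Fintype.card_fin]
        exact le_of_eq (hreg u)
    have sumN : ∀ u ∈ closedBall1 G x, ∀ φ : V → ℝ,
        ∑ y ∈ G.neighborFinset u, φ y = ∑ i : Fin d, φ (η i u) := by
      intro u hu φ
      rw [← himg u hu, Finset.sum_image (fun i _ j _ h => hinj u hu h)]
    have reindex : ∀ i : Fin d, ∀ φ : V → ℝ,
        ∑ j : Fin d, φ (η j (η i x)) = ∑ j : Fin d, φ (η i (η j x)) := by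
      intro i φ
      have hinj1 : Function.Injective (fun j => η j (η i x)) := hinj _ (hmem i)
      have hAB : Finset.image (fun j => η j (η i x)) Finset.univ
          = Finset.image (fun j => η i (η j x)) Finset.univ := by
        apply Finset.coe_injective
        rw [Finset.coe_image, Finset.coe_image, Finset.coe_univ, Set.image_univ,
          Set.image_univ]
        exact hRange i
      have hcard : (Finset.image (fun j => η i (η j x)) Finset.univ).card
          = (Finset.univ : Finset (Fin d)).card := by
        rw [← hAB, Finset.card_image_of_injective _ hinj1]
      have hinj2 : Set.InjOn (fun j => η i (η j x)) (Finset.univ : Finset (Fin d)) :=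
        Finset.injOn_of_card_image_eq hcard
      rw [← Finset.sum_image (f := φ) (fun p hp q hq h => hinj1 h),
        ← Finset.sum_image (f := φ) (fun p hp q hq h => hinj2 hp hq h), hAB]
    -- the data
    have hdiag : ∀ i : Fin d, g (η i (η i x)) = 0 := by
      intro i; rw [hR i]; exact hg0
    have hE : ∑ i : Fin d, ∑ j : Fin d, g (η j (η i x)) * g (η j x)
        = ∑ i : Fin d, ∑ j : Fin d, g (η j (η i x)) * g (η i x) := by
      calc ∑ i : Fin d, ∑ j : Fin d, g (η j (η i x)) * g (η j x)
          = ∑ j : Fin d, ∑ i : Fin d, g (η j (η i x)) * g (η j x) := Finset.sum_comm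
        _ = ∑ j : Fin d, (∑ i : Fin d, g (η j (η i x))) * g (η j x) :=
            Finset.sum_congr rfl (fun j _ => (Finset.sum_mul _ _ _).symm)
        _ = ∑ j : Fin d, (∑ i : Fin d, g (η i (η j x))) * g (η j x) := by
            refine Finset.sum_congr rfl (fun j _ => ?_)
            rw [← reindex j g]
        _ = ∑ j : Fin d, ∑ i : Fin d, g (η i (η j x)) * g (η j x) :=
            Finset.sum_congr rfl (fun j _ => Finset.sum_mul _ _ _)
        _ = ∑ i : Fin d, ∑ j : Fin d, g (η j (η i x)) * g (η i x) := rfl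
    -- computing the operators
    have hLapx : graphLap G g x = ∑ i, g (η i x) := by
      unfold graphLap
      rw [sumN x hx1 (fun y => g y - g x)]
      exact Finset.sum_congr rfl (fun i _ => by rw [hg0]; ring)
    have hLapy : ∀ i, graphLap G g (η i x) = ∑ j, (g (η j (η i x)) - g (η i x)) := by
      intro i
      unfold graphLap
      rw [sumN (η i x) (hmem i) (fun y => g y - g (η i x))]
    have hGx : gammaOp G g g x = (∑ i, (g (η i x))^2)/2 := by
      rw [gammaOp_eq, sumN x hx1 (fun y => (g y - g x) * (g y - g x))]
      congr 1
      exact Finset.sum_congr rfl (fun i _ => by rw [hg0]; ring)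
    have hGy : ∀ i, gammaOp G g g (η i x)
        = (∑ j, (g (η j (η i x)) - g (η i x))^2)/2 := by
      intro i
      rw [gammaOp_eq,
        sumN (η i x) (hmem i) (fun y => (g y - g (η i x)) * (g y - g (η i x)))]
      congr 1
      exact Finset.sum_congr rfl (fun j _ => by ring)
    have hG2 : gamma2Op G g x
        = ((∑ i, ((∑ j, (g (η j (η i x)) - g (η i x))^2)/2 - (∑ j, (g (η j x))^2)/2)) -
            2 * ((∑ i, g (η i x) *
              ((∑ j, (g (η j (η i x)) - g (η i x))) - ∑ j, g (η j x)))/2)) / 2 := by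
      unfold gamma2Op
      have h1 : graphLap G (fun z => gammaOp G g g z) x
          = ∑ i, ((∑ j, (g (η j (η i x)) - g (η i x))^2)/2 - (∑ j, (g (η j x))^2)/2) := by
        unfold graphLap
        rw [sumN x hx1 (fun y => gammaOp G g g y - gammaOp G g g x)]
        exact Finset.sum_congr rfl (fun i _ => by rw [hGy i, hGx])
      have h2 : gammaOp G g (graphLap G g) x
          = (∑ i, g (η i x) *
              ((∑ j, (g (η j (η i x)) - g (η i x))) - ∑ j, g (η j x)))/2 := by
        rw [gammaOp_eq,
          sumN x hx1 (fun y => (g y - g x) * (graphLap G g y - graphLap G g x))]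
        congr 1
        refine Finset.sum_congr rfl (fun i _ => ?_)
        simp only [hLapy i, hLapx, hg0]
        ring
      rw [h1, h2]
    rw [hGx, hG2]
    exact key_ineq d (fun i => g (η i x)) (fun i j => g (η j (η i x))) hE hdiag
  exact ⟨main, main⟩
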